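/- For the Frank copula, C_θ(u,v) is strictly increasing in θ for fixed (u,v) ∈ (0,1)²; in particular for θ > 0 one has C_θ(u,v) > uv and for θ < 0 one has C_θ(u,v) < uv. -/

import Mathlib

noncomputable def frankCopula (θ u v : ℝ) : ℝ :=
  -(1/θ) * Real.log (1 + (Real.exp (-θ*u) - 1) * (Real.exp (-θ*v) - 1) / (Real.exp (-θ) - 1))

/-- The Frank copula extended by continuity at θ = 0 to the independence copula uv. -/
noncomputable def frankCopulaExt (θ u v : ℝ) : ℝ :=
  if θ = 0 then u * v else frankCopula θ u v

open Real


noncomputable def mfun (t : ℝ) : ℝ := if t = 0 then 1 else t / (Real.exp t - 1)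

lemma mfun_of_ne (t : ℝ) (ht : t ≠ 0) : mfun t = t / (Real.exp t - 1) := if_neg ht

lemma expm1_pos {t : ℝ} (ht : 0 < t) : 0 < Real.exp t - 1 := by
  have := Real.add_one_lt_exp ht.ne'; linarith

lemma expm1_neg {t : ℝ} (ht : t < 0) : Real.exp t - 1 < 0 := by
  have := Real.exp_lt_one_iff.2 ht; linarith

lemma mfun_pos (t : ℝ) : 0 < mfun t := by
  rcases lt_trichotomy t 0 with h | h | h
  · rw [mfun_of_ne t h.ne]
    exact div_pos_of_neg_of_neg h (expm1_neg h)
  · simp [mfun, h]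
  · rw [mfun_of_ne t h.ne']
    exact div_pos h (expm1_pos h)

lemma slope_lt {s t : ℝ} (hs : s ≠ 0) (ht : t ≠ 0) (hst : s < t) :
    (Real.exp s - 1) / s < (Real.exp t - 1) / t := by
  have := strictConvexOn_exp.secant_strict_mono (a := 0) (x := s) (y := t)
    trivial trivial trivial hs ht hst
  simpa [Real.exp_zero] using this

lemma slope_pos {t : ℝ} (ht : t ≠ 0) : 0 < (Real.exp t - 1) / t := by
  rcases ht.lt_or_gt with h | h
  · exact div_pos_of_neg_of_neg (by linarith [expm1_neg h]) h
  · exact div_pos (expm1_pos h) h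

lemma mfun_anti {s t : ℝ} (hs : s ≠ 0) (ht : t ≠ 0) (hst : s < t) : mfun t < mfun s := by
  rw [mfun_of_ne t ht, mfun_of_ne s hs]
  rw [show t / (Real.exp t - 1) = ((Real.exp t - 1)/t)⁻¹ from (inv_div _ _).symm,
      show s / (Real.exp s - 1) = ((Real.exp s - 1)/s)⁻¹ from (inv_div _ _).symm]
  exact inv_strictAnti₀ (slope_pos hs) (slope_lt hs ht hst)

noncomputable def Ffun (s : ℝ) : ℝ := s - Real.log (Real.exp (Real.exp s) - 1)
noncomputable def Hfun (s : ℝ) : ℝ := s - Real.log (1 - Real.exp (-Real.exp s))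

lemma mfun_neg_of_pos {t : ℝ} (ht : 0 < t) :
    mfun (-t) = t * Real.exp t / (Real.exp t - 1) := by
  rw [mfun_of_ne _ (by linarith : -t ≠ 0)]
  have h1 : Real.exp t - 1 ≠ 0 := (expm1_pos ht).ne'
  have h2 : Real.exp t ≠ 0 := (Real.exp_pos t).ne'
  have h3 : Real.exp (-t) - 1 ≠ 0 := (expm1_neg (by linarith : -t < 0)).ne
  rw [div_eq_div_iff h3 h1, Real.exp_neg]
  field_simp
  ring

lemma Ffun_hasDeriv (s : ℝ) : HasDerivAt Ffun (1 - mfun (-Real.exp s)) s := by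
  have hne : Real.exp (Real.exp s) - 1 ≠ 0 := (expm1_pos (Real.exp_pos s)).ne'
  have h1 : HasDerivAt (fun s => Real.exp (Real.exp s)) (Real.exp (Real.exp s) * Real.exp s) s :=
    (Real.hasDerivAt_exp (Real.exp s)).comp s (Real.hasDerivAt_exp s)
  have h2 : HasDerivAt (fun s => Real.exp (Real.exp s) - 1)
      (Real.exp (Real.exp s) * Real.exp s) s := h1.sub_const 1
  have h3 : HasDerivAt (fun s => Real.log (Real.exp (Real.exp s) - 1))
      ((Real.exp (Real.exp s) - 1)⁻¹ * (Real.exp (Real.exp s) * Real.exp s)) s :=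
    ((Real.hasDerivAt_log hne).comp s h2 :)
  have h4 := (hasDerivAt_id s).sub h3
  refine h4.congr_deriv ?_; symm
  rw [mfun_neg_of_pos (Real.exp_pos s)]
  field_simp

lemma Hfun_hasDeriv (s : ℝ) : HasDerivAt Hfun (1 - mfun (Real.exp s)) s := by
  have hlt : Real.exp (-Real.exp s) < 1 := Real.exp_lt_one_iff.2 (neg_lt_zero.2 (Real.exp_pos s))
  have hne : 1 - Real.exp (-Real.exp s) ≠ 0 := by linarith
  have h1 : HasDerivAt (fun s => -Real.exp s) (-Real.exp s) s := (Real.hasDerivAt_exp s).neg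
  have h2 : HasDerivAt (fun s => Real.exp (-Real.exp s))
      (Real.exp (-Real.exp s) * -Real.exp s) s :=
    ((Real.hasDerivAt_exp (-Real.exp s)).comp s h1 :)
  have h3 : HasDerivAt (fun s => 1 - Real.exp (-Real.exp s))
      (Real.exp (-Real.exp s) * Real.exp s) s := by
    have := (hasDerivAt_const s (1:ℝ)).sub h2
    refine this.congr_deriv ?_; ring
  have h4 : HasDerivAt (fun s => Real.log (1 - Real.exp (-Real.exp s)))
      ((1 - Real.exp (-Real.exp s))⁻¹ * (Real.exp (-Real.exp s) * Real.exp s)) s :=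
    ((Real.hasDerivAt_log hne).comp s h3 :)
  have h5 := (hasDerivAt_id s).sub h4
  refine h5.congr_deriv ?_; symm
  rw [mfun_of_ne _ (Real.exp_pos s).ne']
  have hne2 : Real.exp (Real.exp s) - 1 ≠ 0 := (expm1_pos (Real.exp_pos s)).ne'
  rw [Real.exp_neg]
  have h2 : Real.exp (Real.exp s) ≠ 0 := (Real.exp_pos _).ne'
  field_simp

lemma Flog {t : ℝ} (ht : 0 < t) : Real.log (mfun t) = Ffun (Real.log t) := by
  rw [mfun_of_ne t ht.ne']
  unfold Ffun
  rw [Real.exp_log ht, Real.log_div ht.ne' (expm1_pos ht).ne']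

lemma Hlog {t : ℝ} (ht : t < 0) : Real.log (mfun t) = Hfun (Real.log (-t)) := by
  have h0 : (0:ℝ) < -t := by linarith
  rw [mfun_of_ne t ht.ne, Hfun, Real.exp_log h0, neg_neg]
  have h1 : t / (Real.exp t - 1) = (-t) / (1 - Real.exp t) := by
    rw [div_eq_div_iff (expm1_neg ht).ne (by linarith [Real.exp_lt_one_iff.2 ht] : 1 - Real.exp t ≠ 0)]
    ring
  have h2 : (0:ℝ) < 1 - Real.exp t := by linarith [Real.exp_lt_one_iff.2 ht]
  rw [h1, Real.log_div h0.ne' h2.ne']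


lemma Fdiff_strictAnti {δ : ℝ} (hδ : 0 < δ) :
    StrictAnti (fun s => Ffun (s + δ) - Ffun s) := by
  apply strictAnti_of_deriv_neg
  intro s
  have h1 : HasDerivAt (fun s => Ffun (s + δ)) ((1 - mfun (-Real.exp (s + δ))) * 1) s :=
    ((Ffun_hasDeriv (s + δ)).comp s ((hasDerivAt_id s).add_const δ) :)
  have h2 := h1.sub (Ffun_hasDeriv s)
  rw [show (fun s => Ffun (s + δ) - Ffun s) = (fun s => Ffun (s + δ)) - Ffun from rfl, h2.deriv]
  have h3 : mfun (-Real.exp s) < mfun (-Real.exp (s + δ)) := by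
    apply mfun_anti (by simp [(Real.exp_pos (s+δ)).ne']) (by simp [(Real.exp_pos s).ne'])
    simp only [neg_lt_neg_iff]
    exact Real.exp_lt_exp.2 (by linarith)
  linarith

lemma Hdiff_strictMono {δ : ℝ} (hδ : 0 < δ) :
    StrictMono (fun s => Hfun (s + δ) - Hfun s) := by
  apply strictMono_of_deriv_pos
  intro s
  have h1 : HasDerivAt (fun s => Hfun (s + δ)) ((1 - mfun (Real.exp (s + δ))) * 1) s :=
    ((Hfun_hasDeriv (s + δ)).comp s ((hasDerivAt_id s).add_const δ) :)
  have h2 := h1.sub (Hfun_hasDeriv s)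
  rw [show (fun s => Hfun (s + δ) - Hfun s) = (fun s => Hfun (s + δ)) - Hfun from rfl, h2.deriv]
  have h3 : mfun (Real.exp (s + δ)) < mfun (Real.exp s) :=
    mfun_anti (Real.exp_pos s).ne' (Real.exp_pos (s+δ)).ne' (Real.exp_lt_exp.2 (by linarith))
  linarith


lemma core {a b x y : ℝ} (hab : a < b) (hx : 0 < x) (hxy : x < y) :
    mfun (b*y) * mfun (a*x) < mfun (b*x) * mfun (a*y) := by
  have hy : 0 < y := hx.trans hxy
  have m0 : mfun 0 = 1 := if_pos rfl
  rcases lt_trichotomy a 0 with ha | ha | ha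
  · rcases lt_trichotomy b 0 with hb | hb | hb
    · -- a < b < 0 : H case
      have hna : (0:ℝ) < -a := by linarith
      have hnb : (0:ℝ) < -b := by linarith
      have hδ : 0 < Real.log (-a) - Real.log (-b) :=
        sub_pos.2 (Real.log_lt_log hnb (by linarith))
      have h := Hdiff_strictMono hδ
        (show Real.log (-b) + Real.log x < Real.log (-b) + Real.log y from
          by linarith [Real.log_lt_log hx hxy])
      simp only at h
      have e : ∀ c z : ℝ, c < 0 → 0 < z → Real.log (-c) + Real.log z = Real.log (-(c*z)) := by
        intro c z hc hz
        rw [show -(c*z) = (-c)*z by ring, Real.log_mul (by linarith : -c ≠ 0) hz.ne']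
      have eβx := e b x hb hx; have eβy := e b y hb hy
      have eαx := e a x ha hx; have eαy := e a y ha hy
      rw [show Real.log (-b) + Real.log x + (Real.log (-a) - Real.log (-b))
            = Real.log (-(a*x)) by rw [← eαx]; ring,
          show Real.log (-b) + Real.log y + (Real.log (-a) - Real.log (-b))
            = Real.log (-(a*y)) by rw [← eαy]; ring, eβx, eβy] at h
      rw [← Hlog (by nlinarith : a*x < 0), ← Hlog (by nlinarith : a*y < 0),
          ← Hlog (by nlinarith : b*x < 0), ← Hlog (by nlinarith : b*y < 0)] at h
      have hp : ∀ t : ℝ, 0 < mfun t := mfun_pos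
      rw [← Real.log_lt_log_iff (mul_pos (hp _) (hp _)) (mul_pos (hp _) (hp _))]
      rw [Real.log_mul (hp _).ne' (hp _).ne', Real.log_mul (hp _).ne' (hp _).ne']
      linarith
    · -- b = 0
      subst hb
      simp only [zero_mul, m0, one_mul]
      exact mfun_anti (by nlinarith : a*y ≠ 0) (by nlinarith : a*x ≠ 0) (by nlinarith)
    · -- a < 0 < b
      have h1 : mfun (b*y) < mfun (b*x) :=
        mfun_anti (by nlinarith : b*x ≠ 0) (by nlinarith : b*y ≠ 0) (by nlinarith)
      have h2 : mfun (a*x) < mfun (a*y) :=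
        mfun_anti (by nlinarith : a*y ≠ 0) (by nlinarith : a*x ≠ 0) (by nlinarith)
      exact mul_lt_mul'' h1 h2 (mfun_pos _).le (mfun_pos _).le
  · -- a = 0
    subst ha
    simp only [zero_mul, m0, mul_one]
    exact mfun_anti (by nlinarith : b*x ≠ 0) (by nlinarith : b*y ≠ 0) (by nlinarith)
  · -- 0 < a < b : F case
    have hb : (0:ℝ) < b := ha.trans hab
    have hδ : 0 < Real.log b - Real.log a := sub_pos.2 (Real.log_lt_log ha hab)
    have h := Fdiff_strictAnti hδ
      (show Real.log a + Real.log x < Real.log a + Real.log y from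
        by linarith [Real.log_lt_log hx hxy])
    simp only at h
    have e : ∀ c z : ℝ, 0 < c → 0 < z → Real.log c + Real.log z = Real.log (c*z) := by
      intro c z hc hz; rw [Real.log_mul hc.ne' hz.ne']
    rw [show Real.log a + Real.log x + (Real.log b - Real.log a)
          = Real.log (b*x) by rw [← e b x hb hx]; ring,
        show Real.log a + Real.log y + (Real.log b - Real.log a)
          = Real.log (b*y) by rw [← e b y hb hy]; ring,
        e a x ha hx, e a y ha hy] at h
    rw [← Flog (by positivity : (0:ℝ) < a*x), ← Flog (by positivity : (0:ℝ) < a*y),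
        ← Flog (by positivity : (0:ℝ) < b*x), ← Flog (by positivity : (0:ℝ) < b*y)] at h
    have hp : ∀ t : ℝ, 0 < mfun t := mfun_pos
    rw [← Real.log_lt_log_iff (mul_pos (hp _) (hp _)) (mul_pos (hp _) (hp _))]
    rw [Real.log_mul (hp _).ne' (hp _).ne', Real.log_mul (hp _).ne' (hp _).ne']
    linarith

noncomputable def Wc (θ x : ℝ) : ℝ :=
  if θ = 0 then x else (Real.exp (-θ*x) - 1) / (Real.exp (-θ) - 1)

lemma expm1_ne {t : ℝ} (ht : t ≠ 0) : Real.exp t - 1 ≠ 0 := by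
  intro h; exact ht ((Real.exp_eq_one_iff t).1 (by linarith))

lemma aux_div (θ x a b : ℝ) (hx : x ≠ 0) (ha : a ≠ 0) (hb1 : b - 1 ≠ 0)
    (hmul : a * b = 1) : θ*x/(b-1)/x = (a - 1)⁻¹ * (a * (-θ)) := by
  rw [show a - 1 = -a*(b-1) by linear_combination hmul]
  rw [show θ*x/(b-1)/x = θ/(b-1) by field_simp]
  rw [show (-a*(b-1))⁻¹ * (a * (-θ)) = θ * (a⁻¹ * a) / (b-1) by field_simp,
     inv_mul_cancel₀ ha, mul_one]

lemma Wc_zero (θ : ℝ) : Wc θ 0 = 0 := by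
  unfold Wc; split <;> simp

lemma Wc_one (θ : ℝ) : Wc θ 1 = 1 := by
  unfold Wc; split
  · rfl
  · next h =>
      rw [show -θ*(1:ℝ) = -θ by ring]
      exact div_self (expm1_ne (neg_ne_zero.2 (by simpa using h)))

lemma Wc_strictMono (θ : ℝ) : StrictMono (Wc θ) := by
  intro x y hxy
  unfold Wc; split
  · exact hxy
  · next h =>
    rcases lt_or_gt_of_ne h with hθ | hθ
    · -- θ < 0 : denominator > 0, numerator increasing
      have hD : 0 < Real.exp (-θ) - 1 := expm1_pos (by linarith)
      have hN : Real.exp (-θ*x) < Real.exp (-θ*y) := Real.exp_lt_exp.2 (by nlinarith)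
      have : Real.exp (-θ*x) - 1 < Real.exp (-θ*y) - 1 := by linarith
      gcongr
    · -- θ > 0 : denominator < 0, numerator decreasing
      have hD : Real.exp (-θ) - 1 < 0 := expm1_neg (by linarith)
      have hN : Real.exp (-θ*y) < Real.exp (-θ*x) := Real.exp_lt_exp.2 (by nlinarith)
      exact div_lt_div_of_neg_of_lt hD (by linarith)

lemma Wc_mem (θ : ℝ) {x : ℝ} (hx : x ∈ Set.Ioo (0:ℝ) 1) : Wc θ x ∈ Set.Ioo (0:ℝ) 1 := by
  constructor
  · have := Wc_strictMono θ hx.1; rwa [Wc_zero] at this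
  · have := Wc_strictMono θ hx.2; rwa [Wc_one] at this

lemma Wc_frank {θ u v : ℝ} (hθ : θ ≠ 0) (hu : u ∈ Set.Ioo (0:ℝ) 1) (hv : v ∈ Set.Ioo (0:ℝ) 1) :
    Wc θ (frankCopula θ u v) = Wc θ u * Wc θ v := by
  set A := Real.exp (-θ*u) - 1 with hA
  set B := Real.exp (-θ*v) - 1 with hB
  set D := Real.exp (-θ) - 1 with hD
  have hDne : D ≠ 0 := expm1_ne (neg_ne_zero.2 hθ)
  have hw : 0 < 1 + A * B / D := by
    rcases lt_or_gt_of_ne hθ with h | h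
    · -- θ < 0 : A,B,D > 0
      have hA0 : 0 < A := expm1_pos (by nlinarith [hu.1, hu.2])
      have hB0 : 0 < B := expm1_pos (by nlinarith [hv.1, hv.2])
      have hD0 : 0 < D := expm1_pos (by linarith)
      positivity
    · -- θ > 0 : D < A < 0, D < B < 0, -1 < D
      have hA0 : A < 0 := expm1_neg (by nlinarith [hu.1])
      have hB0 : B < 0 := expm1_neg (by nlinarith [hv.1])
      have hDA : D < A := by
        have : Real.exp (-θ) < Real.exp (-θ*u) := Real.exp_lt_exp.2 (by nlinarith [hu.2])
        simp only [hA, hD]; linarith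
      have hDB : D < B := by
        have : Real.exp (-θ) < Real.exp (-θ*v) := Real.exp_lt_exp.2 (by nlinarith [hv.2])
        simp only [hB, hD]; linarith
      have hD1 : -1 < D := by have := Real.exp_pos (-θ); simp only [hD]; linarith
      have hD0 : D < 0 := expm1_neg (by linarith)
      have key : D + A * B < 0 := by nlinarith
      have : 1 + A * B / D = (D + A * B) / D := by field_simp
      rw [this]
      exact div_pos_of_neg_of_neg key hD0
  have hC : frankCopula θ u v = -(1/θ) * Real.log (1 + A * B / D) := by
    unfold frankCopula; rw [← hA, ← hB, ← hD]
  have hlog : -θ * frankCopula θ u v = Real.log (1 + A * B / D) := by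
    rw [hC]; field_simp
  have hexp : Real.exp (-θ * frankCopula θ u v) = 1 + A * B / D := by
    rw [hlog, Real.exp_log hw]
  unfold Wc
  rw [if_neg hθ, if_neg hθ, if_neg hθ, hexp, ← hA, ← hB, ← hD]
  field_simp
  ring

lemma frank_mem {θ u v : ℝ} (hθ : θ ≠ 0) (hu : u ∈ Set.Ioo (0:ℝ) 1) (hv : v ∈ Set.Ioo (0:ℝ) 1) :
    frankCopula θ u v ∈ Set.Ioo (0:ℝ) 1 := by
  have hid := Wc_frank hθ hu hv
  have hWu := Wc_mem θ hu
  have hWv := Wc_mem θ hv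
  have h0 : Wc θ 0 < Wc θ (frankCopula θ u v) := by
    rw [Wc_zero, hid]; exact mul_pos hWu.1 hWv.1
  have h1 : Wc θ (frankCopula θ u v) < Wc θ 1 := by
    rw [Wc_one, hid]; nlinarith [hWu.1, hWu.2, hWv.1, hWv.2]
  exact ⟨(Wc_strictMono θ).lt_iff_lt.1 h0, (Wc_strictMono θ).lt_iff_lt.1 h1⟩

lemma ext_mem {θ u v : ℝ} (hu : u ∈ Set.Ioo (0:ℝ) 1) (hv : v ∈ Set.Ioo (0:ℝ) 1) :
    frankCopulaExt θ u v ∈ Set.Ioo (0:ℝ) 1 := by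
  unfold frankCopulaExt; split
  · constructor
    · exact mul_pos hu.1 hv.1
    · nlinarith [hu.1, hu.2, hv.1, hv.2]
  · next h => exact frank_mem h hu hv

lemma Wc_ext {θ u v : ℝ} (hu : u ∈ Set.Ioo (0:ℝ) 1) (hv : v ∈ Set.Ioo (0:ℝ) 1) :
    Wc θ (frankCopulaExt θ u v) = Wc θ u * Wc θ v := by
  unfold frankCopulaExt
  split
  · next h => subst h; unfold Wc; simp
  · next h => exact Wc_frank h hu hv

lemma logW_hasDeriv (θ : ℝ) {x : ℝ} (hx : 0 < x) :
    HasDerivAt (fun y => Real.log (Wc θ y)) (mfun (θ*x) / x) x := by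
  rcases eq_or_ne θ 0 with hθ | hθ
  · subst hθ
    have : HasDerivAt (fun y => Real.log (Wc 0 y)) x⁻¹ x := by
      have h := Real.hasDerivAt_log hx.ne'
      apply h.congr_of_eventuallyEq
      filter_upwards with y
      unfold Wc; simp
    convert this using 1
    rw [zero_mul, show mfun 0 = 1 from if_pos rfl]
    field_simp
  · have hne : Real.exp (-θ*x) - 1 ≠ 0 := expm1_ne (by simp [hθ, hx.ne'])
    have h1 : HasDerivAt (fun y => -θ*y) (-θ) x := by
      simpa using (hasDerivAt_id x).const_mul (-θ)
    have h2 : HasDerivAt (fun y => Real.exp (-θ*y)) (Real.exp (-θ*x) * (-θ)) x :=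
      (Real.hasDerivAt_exp (-θ*x)).comp x h1
    have h3 : HasDerivAt (fun y => Real.exp (-θ*y) - 1) (Real.exp (-θ*x) * (-θ)) x :=
      h2.sub_const 1
    have h4 : HasDerivAt (fun y => Real.log (Real.exp (-θ*y) - 1))
        ((Real.exp (-θ*x) - 1)⁻¹ * (Real.exp (-θ*x) * (-θ))) x :=
      ((Real.hasDerivAt_log hne).comp x h3 :)
    have h5 := h4.sub_const (Real.log (Real.exp (-θ) - 1))
    have heq : (fun y => Real.log (Wc θ y)) =ᶠ[nhds x]
        (fun y => Real.log (Real.exp (-θ*y) - 1) - Real.log (Real.exp (-θ) - 1)) := by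
      filter_upwards [eventually_ne_nhds hx.ne'] with y hy
      unfold Wc
      rw [if_neg hθ, Real.log_div (expm1_ne (by simp [hθ, hy])) (expm1_ne (neg_ne_zero.2 hθ))]
    rw [show mfun (θ*x) / x = (Real.exp (-θ*x) - 1)⁻¹ * (Real.exp (-θ*x) * (-θ)) by
      rw [mfun_of_ne _ (mul_ne_zero hθ hx.ne')]
      have hne2 : Real.exp (θ*x) - 1 ≠ 0 := expm1_ne (mul_ne_zero hθ hx.ne')
      have hmul : Real.exp (-θ*x) * Real.exp (θ*x) = 1 := by
        rw [← Real.exp_add, show -θ*x + θ*x = 0 by ring, Real.exp_zero]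
      exact aux_div θ x _ _ hx.ne' (Real.exp_pos _).ne' hne2 hmul]
    exact h5.congr_of_eventuallyEq heq

lemma key_lemma {θ₁ θ₂ c u v : ℝ} (h12 : θ₁ < θ₂) (hc : c ∈ Set.Ioo (0:ℝ) 1)
    (hu : u ∈ Set.Ioo (0:ℝ) 1) (hv : v ∈ Set.Ioo (0:ℝ) 1) (huv : u ≤ v)
    (hW : Wc θ₁ c = Wc θ₁ u * Wc θ₁ v) :
    Wc θ₂ c < Wc θ₂ u * Wc θ₂ v := by
  have hWu := Wc_mem θ₁ hu
  have hWv := Wc_mem θ₁ hv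
  have hWu2 := Wc_mem θ₂ hu
  have hWv2 := Wc_mem θ₂ hv
  have hWc2 := Wc_mem θ₂ hc
  have hcu : c < u := by
    apply (Wc_strictMono θ₁).lt_iff_lt.1
    rw [hW]
    exact mul_lt_of_lt_one_right hWu.1 hWv.2
  have hcont : ∀ θ : ℝ, ∀ a b : ℝ, 0 < a →
      ContinuousOn (fun y => Real.log (Wc θ y)) (Set.Icc a b) := by
    intro θ a b ha y hy
    exact ((logW_hasDeriv θ (lt_of_lt_of_le ha hy.1)).continuousAt).continuousWithinAt
  have hdiff : ∀ θ : ℝ, ∀ a b : ℝ, 0 < a →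
      DifferentiableOn ℝ (fun y => Real.log (Wc θ y)) (Set.Ioo a b) := by
    intro θ a b ha y hy
    exact ((logW_hasDeriv θ (lt_trans ha hy.1)).differentiableAt).differentiableWithinAt
  obtain ⟨ξ₁, hξ₁, e₁⟩ := exists_ratio_deriv_eq_ratio_slope
    (fun y => Real.log (Wc θ₁ y)) hcu (hcont θ₁ c u hc.1) (hdiff θ₁ c u hc.1)
    (fun y => Real.log (Wc θ₂ y)) (hcont θ₂ c u hc.1) (hdiff θ₂ c u hc.1)
  obtain ⟨ξ₂, hξ₂, e₂⟩ := exists_ratio_deriv_eq_ratio_slope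
    (fun y => Real.log (Wc θ₁ y)) hv.2 (hcont θ₁ v 1 hv.1) (hdiff θ₁ v 1 hv.1)
    (fun y => Real.log (Wc θ₂ y)) (hcont θ₂ v 1 hv.1) (hdiff θ₂ v 1 hv.1)
  have hξ₁0 : 0 < ξ₁ := lt_trans hc.1 hξ₁.1
  have hξ₂0 : 0 < ξ₂ := lt_trans hv.1 hξ₂.1
  have hξξ : ξ₁ < ξ₂ := lt_of_lt_of_le (lt_of_lt_of_le hξ₁.2 huv) hξ₂.1.le
  rw [(logW_hasDeriv θ₁ hξ₁0).deriv, (logW_hasDeriv θ₂ hξ₁0).deriv] at e₁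
  rw [(logW_hasDeriv θ₁ hξ₂0).deriv, (logW_hasDeriv θ₂ hξ₂0).deriv] at e₂
  set Ku := Real.log (Wc θ₂ u)
  set Kv := Real.log (Wc θ₂ v)
  set Kc := Real.log (Wc θ₂ c)
  set Lu := Real.log (Wc θ₁ u)
  set Lv := Real.log (Wc θ₁ v)
  set Lc := Real.log (Wc θ₁ c)
  have hL1 : Real.log (Wc θ₁ 1) = 0 := by rw [Wc_one]; exact Real.log_one
  have hK1 : Real.log (Wc θ₂ 1) = 0 := by rw [Wc_one]; exact Real.log_one
  have hLc : Lc = Lu + Lv := by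
    rw [show Lc = Real.log (Wc θ₁ c) from rfl, hW, Real.log_mul hWu.1.ne' hWv.1.ne']
  have hWc1 := Wc_mem θ₁ hc
  have hΔpos : 0 < Lu - Lc := by
    have := Real.log_lt_log hWc1.1 ((Wc_strictMono θ₁) hcu)
    linarith
  rw [hL1, hK1] at e₂
  -- e₁ : (Ku - Kc) * (mfun (θ₁*ξ₁)/ξ₁) = (Lu - Lc) * (mfun (θ₂*ξ₁)/ξ₁)
  -- e₂ : (0 - Kv) * (mfun (θ₁*ξ₂)/ξ₂) = (0 - Lv) * (mfun (θ₂*ξ₂)/ξ₂)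
  have e₁' : (Ku - Kc) * mfun (θ₁*ξ₁) = (Lu - Lc) * mfun (θ₂*ξ₁) := by
    field_simp at e₁
    rw [mul_comm ξ₁ θ₂] at e₁
    linear_combination e₁
  have e₂' : (0 - Kv) * mfun (θ₁*ξ₂) = (0 - Lv) * mfun (θ₂*ξ₂) := by
    field_simp at e₂
    rw [mul_comm ξ₂ θ₂] at e₂
    exact e₂
  have hcore : mfun (θ₂*ξ₂) * mfun (θ₁*ξ₁) < mfun (θ₂*ξ₁) * mfun (θ₁*ξ₂) :=
    core h12 hξ₁0 hξξ
  have hΔeq : 0 - Lv = Lu - Lc := by linarith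
  rw [hΔeq] at e₂'
  have m11 := mfun_pos (θ₁*ξ₁)
  have m12 := mfun_pos (θ₁*ξ₂)
  have m21 := mfun_pos (θ₂*ξ₁)
  have m22 := mfun_pos (θ₂*ξ₂)
  have hKlt : 0 - Kv < Ku - Kc := by
    have h2 : (Lu - Lc) * (mfun (θ₂*ξ₂) * mfun (θ₁*ξ₁)) < (Lu - Lc) * (mfun (θ₂*ξ₁) * mfun (θ₁*ξ₂)) :=
      mul_lt_mul_of_pos_left hcore hΔpos
    have h3 : (0 - Kv) * (mfun (θ₁*ξ₂) * mfun (θ₁*ξ₁)) < (Ku - Kc) * (mfun (θ₁*ξ₁) * mfun (θ₁*ξ₂)) := by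
      nlinarith [e₁', e₂']
    have h4 := lt_of_mul_lt_mul_right (by nlinarith [h3] :
      (0 - Kv) * (mfun (θ₁*ξ₁) * mfun (θ₁*ξ₂)) < (Ku - Kc) * (mfun (θ₁*ξ₁) * mfun (θ₁*ξ₂)))
      (le_of_lt (mul_pos m11 m12))
    exact h4
  have hfin : Kc < Ku + Kv := by linarith
  have : Real.log (Wc θ₂ c) < Real.log (Wc θ₂ u * Wc θ₂ v) := by
    rw [Real.log_mul hWu2.1.ne' hWv2.1.ne']
    exact hfin
  exact (Real.log_lt_log_iff hWc2.1 (mul_pos hWu2.1 hWv2.1)).1 this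

lemma masterE {u v : ℝ} (hu : u ∈ Set.Ioo (0:ℝ) 1) (hv : v ∈ Set.Ioo (0:ℝ) 1)
    {θ₁ θ₂ : ℝ} (h : θ₁ < θ₂) : frankCopulaExt θ₁ u v < frankCopulaExt θ₂ u v := by
  have hc : frankCopulaExt θ₁ u v ∈ Set.Ioo (0:ℝ) 1 := ext_mem hu hv
  have hW1 : Wc θ₁ (frankCopulaExt θ₁ u v) = Wc θ₁ u * Wc θ₁ v := Wc_ext hu hv
  have hkey : Wc θ₂ (frankCopulaExt θ₁ u v) < Wc θ₂ u * Wc θ₂ v := by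
    rcases le_total u v with huv | huv
    · exact key_lemma h hc hu hv huv hW1
    · rw [mul_comm]
      exact key_lemma h hc hv hu huv (hW1.trans (mul_comm _ _))
  have hW2 : Wc θ₂ (frankCopulaExt θ₂ u v) = Wc θ₂ u * Wc θ₂ v := Wc_ext hu hv
  apply (Wc_strictMono θ₂).lt_iff_lt.1
  rw [hW2]
  exact hkey

theorem frank_strictMono_in_theta (u v : ℝ)
    (hu : u ∈ Set.Ioo (0:ℝ) 1) (hv : v ∈ Set.Ioo (0:ℝ) 1) :
    (∀ θ₁ θ₂ : ℝ, θ₁ < θ₂ → frankCopulaExt θ₁ u v < frankCopulaExt θ₂ u v) ∧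
    (∀ θ : ℝ, (0 < θ → u * v < frankCopula θ u v) ∧ (θ < 0 → frankCopula θ u v < u * v)) := by
  constructor
  · exact fun θ₁ θ₂ h => masterE hu hv h
  · intro θ
    constructor
    · intro hθ
      have := masterE hu hv hθ
      rwa [show frankCopulaExt 0 u v = u * v from if_pos rfl,
        show frankCopulaExt θ u v = frankCopula θ u v from if_neg hθ.ne'] at this
    · intro hθ
      have := masterE hu hv hθ
      rwa [show frankCopulaExt 0 u v = u * v from if_pos rfl,
        show frankCopulaExt θ u v = frankCopula θ u v from if_neg hθ.ne] at this
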